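/- arXiv:0911.4522 — 3 statements merged into one kernel-verified Lean document; each statement's English description precedes it below -/
import Mathlib

section
/- The function φ(x,y) = (1-x)·h((γ-y)/(1-x)), where h is the binary entropy function, is concave on the region {(x,y) : 0 < x < 1, 0 < y < 1, 0 < γ-y < 1-x}. -/
/-- Binary entropy function (base 2). -/
noncomputable def binEnt (p : ℝ) : ℝ :=
  -(p * Real.logb 2 p) - (1 - p) * Real.logb 2 (1 - p)

private lemma combo_pos {x y u v : ℝ} (hx : 0 < x) (hy : 0 < y)
    (hu : 0 ≤ u) (hv : 0 ≤ v) (huv : u + v = 1) : 0 < u * x + v * y := by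
  rcases hu.eq_or_lt with h | h
  · have hv1 : v = 1 := by linarith
    rw [← h, hv1]
    simpa using hy
  · exact add_pos_of_pos_of_nonneg (mul_pos h hx) (mul_nonneg hv hy.le)

/-- Two-point log-sum inequality. -/
private lemma logsum {a1 a2 s1 s2 : ℝ} (ha1 : 0 < a1) (ha2 : 0 < a2)
    (hs1 : 0 < s1) (hs2 : 0 < s2) :
    (a1 + a2) * Real.log ((a1 + a2) / (s1 + s2)) ≤
      a1 * Real.log (a1 / s1) + a2 * Real.log (a2 / s2) := by
  have hS : 0 < s1 + s2 := by linarith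
  have h := Real.convexOn_mul_log.2 (Set.mem_Ici.2 (div_pos ha1 hs1).le)
      (Set.mem_Ici.2 (div_pos ha2 hs2).le)
      (div_pos hs1 hS).le (div_pos hs2 hS).le
      (by field_simp)
  rw [smul_eq_mul, smul_eq_mul, smul_eq_mul, smul_eq_mul] at h
  have key : s1 / (s1 + s2) * (a1 / s1) + s2 / (s1 + s2) * (a2 / s2)
      = (a1 + a2) / (s1 + s2) := by field_simp
  rw [key] at h
  have h2 := mul_le_mul_of_nonneg_left h hS.le
  calc (a1 + a2) * Real.log ((a1 + a2) / (s1 + s2))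
      = (s1 + s2) * ((a1 + a2) / (s1 + s2) * Real.log ((a1 + a2) / (s1 + s2))) := by
        field_simp
    _ ≤ (s1 + s2) * (s1 / (s1 + s2) * (a1 / s1 * Real.log (a1 / s1))
          + s2 / (s1 + s2) * (a2 / s2 * Real.log (a2 / s2))) := h2
    _ = a1 * Real.log (a1 / s1) + a2 * Real.log (a2 / s2) := by
        field_simp

private lemma binEnt_scaled {A S : ℝ} (hA : 0 < A) (hAS : A < S) :
    S * binEnt (A / S) =
      -((A * Real.log (A / S) + (S - A) * Real.log ((S - A) / S)) / Real.log 2) := by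
  have hS : 0 < S := hA.trans hAS
  have h1 : (1 : ℝ) - A / S = (S - A) / S := by field_simp
  have hl2 : Real.log 2 ≠ 0 := ne_of_gt (Real.log_pos one_lt_two)
  rw [binEnt, h1, Real.logb, Real.logb]
  field_simp
  ring

/-- φ(x,y) = (1-x)·h((γ-y)/(1-x)) is concave on the region
    {(x,y) : 0 < x < 1, 0 < y < 1, 0 < γ-y < 1-x}. -/
theorem phi_concave (γ : ℝ) (hγ0 : 0 < γ) (hγ1 : γ < 1) :
    ConcaveOn ℝ
      {p : ℝ × ℝ | 0 < p.1 ∧ p.1 < 1 ∧ 0 < p.2 ∧ p.2 < 1 ∧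
        0 < γ - p.2 ∧ γ - p.2 < 1 - p.1}
      (fun p : ℝ × ℝ => (1 - p.1) * binEnt ((γ - p.2) / (1 - p.1))) := by
  constructor
  · -- convexity of the region
    rintro p ⟨hp1, hp2, hp3, hp4, hp5, hp6⟩ q ⟨hq1, hq2, hq3, hq4, hq5, hq6⟩ u v hu hv huv
    simp only [Set.mem_setOf_eq, Prod.fst_add, Prod.snd_add, Prod.smul_fst, Prod.smul_snd,
      smul_eq_mul]
    refine ⟨combo_pos hp1 hq1 hu hv huv, ?_, combo_pos hp3 hq3 hu hv huv, ?_, ?_, ?_⟩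
    · have h := combo_pos (by linarith : (0:ℝ) < 1 - p.1) (by linarith : (0:ℝ) < 1 - q.1)
        hu hv huv
      have he : u * (1 - p.1) + v * (1 - q.1) = (u + v) - (u * p.1 + v * q.1) := by ring
      rw [huv] at he; linarith
    · have h := combo_pos (by linarith : (0:ℝ) < 1 - p.2) (by linarith : (0:ℝ) < 1 - q.2)
        hu hv huv
      have he : u * (1 - p.2) + v * (1 - q.2) = (u + v) - (u * p.2 + v * q.2) := by ring
      rw [huv] at he; linarith
    · have h := combo_pos hp5 hq5 hu hv huv
      have he : u * (γ - p.2) + v * (γ - q.2) = (u + v) * γ - (u * p.2 + v * q.2) := by ring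
      rw [huv, one_mul] at he; linarith
    · have h := combo_pos (by linarith : (0:ℝ) < (1 - p.1) - (γ - p.2))
        (by linarith : (0:ℝ) < (1 - q.1) - (γ - q.2)) hu hv huv
      have he : u * ((1 - p.1) - (γ - p.2)) + v * ((1 - q.1) - (γ - q.2))
          = (u + v) * (1 - γ) - (u * p.1 + v * q.1) + (u * p.2 + v * q.2) := by ring
      rw [huv, one_mul] at he; linarith
  · -- the concavity inequality
    rintro p ⟨hp1, hp2, hp3, hp4, hp5, hp6⟩ q ⟨hq1, hq2, hq3, hq4, hq5, hq6⟩ u v hu hv huv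
    rcases hu.eq_or_lt with h | hu0
    · obtain rfl : u = 0 := h.symm
      obtain rfl : v = 1 := by linarith
      simp
    rcases hv.eq_or_lt with h | hv0
    · obtain rfl : v = 0 := h.symm
      obtain rfl : u = 1 := by linarith
      simp
    -- main case: u, v > 0
    set a1 : ℝ := u * (γ - p.2) with ha1def
    set s1 : ℝ := u * (1 - p.1) with hs1def
    set a2 : ℝ := v * (γ - q.2) with ha2def
    set s2 : ℝ := v * (1 - q.1) with hs2def
    have ha1 : 0 < a1 := mul_pos hu0 hp5
    have ha2 : 0 < a2 := mul_pos hv0 hq5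
    have hs1 : 0 < s1 := mul_pos hu0 (by linarith)
    have hs2 : 0 < s2 := mul_pos hv0 (by linarith)
    have ha1s1 : a1 < s1 := by
      rw [ha1def, hs1def]; exact mul_lt_mul_of_pos_left hp6 hu0
    have ha2s2 : a2 < s2 := by
      rw [ha2def, hs2def]; exact mul_lt_mul_of_pos_left hq6 hv0
    have hb1 : 0 < s1 - a1 := by linarith
    have hb2 : 0 < s2 - a2 := by linarith
    have hl2 : 0 < Real.log 2 := Real.log_pos one_lt_two
    -- rewrite combination coordinates
    have hc1 : 1 - (u • p + v • q).1 = s1 + s2 := by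
      simp only [Prod.fst_add, Prod.smul_fst, smul_eq_mul, hs1def, hs2def]
      linear_combination -huv
    have hc2 : γ - (u • p + v • q).2 = a1 + a2 := by
      simp only [Prod.snd_add, Prod.smul_snd, smul_eq_mul, ha1def, ha2def]
      linear_combination -γ * huv
    have hL : (1 - (u • p + v • q).1) * binEnt ((γ - (u • p + v • q).2) / (1 - (u • p + v • q).1))
        = -(((a1 + a2) * Real.log ((a1 + a2) / (s1 + s2))
            + ((s1 + s2) - (a1 + a2)) * Real.log (((s1 + s2) - (a1 + a2)) / (s1 + s2)))
              / Real.log 2) := by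
      rw [hc1, hc2]
      exact binEnt_scaled (by linarith) (by linarith)
    have hR1 : u • ((1 - p.1) * binEnt ((γ - p.2) / (1 - p.1)))
        = -((a1 * Real.log (a1 / s1) + (s1 - a1) * Real.log ((s1 - a1) / s1)) / Real.log 2) := by
      have hd : (γ - p.2) / (1 - p.1) = a1 / s1 := by
        rw [ha1def, hs1def, mul_div_mul_left _ _ (ne_of_gt hu0)]
      rw [smul_eq_mul, hd, show u * ((1 - p.1) * binEnt (a1 / s1)) = s1 * binEnt (a1 / s1) by
        rw [hs1def]; ring]
      exact binEnt_scaled ha1 ha1s1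
    have hR2 : v • ((1 - q.1) * binEnt ((γ - q.2) / (1 - q.1)))
        = -((a2 * Real.log (a2 / s2) + (s2 - a2) * Real.log ((s2 - a2) / s2)) / Real.log 2) := by
      have hd : (γ - q.2) / (1 - q.1) = a2 / s2 := by
        rw [ha2def, hs2def, mul_div_mul_left _ _ (ne_of_gt hv0)]
      rw [smul_eq_mul, hd, show v * ((1 - q.1) * binEnt (a2 / s2)) = s2 * binEnt (a2 / s2) by
        rw [hs2def]; ring]
      exact binEnt_scaled ha2 ha2s2
    show u • ((1 - p.1) * binEnt ((γ - p.2) / (1 - p.1)))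
        + v • ((1 - q.1) * binEnt ((γ - q.2) / (1 - q.1)))
      ≤ (1 - (u • p + v • q).1) * binEnt ((γ - (u • p + v • q).2) / (1 - (u • p + v • q).1))
    rw [hL, hR1, hR2]
    have L1 := logsum ha1 ha2 hs1 hs2
    have L2 := logsum hb1 hb2 hs1 hs2
    have heq : (s1 - a1) + (s2 - a2) = (s1 + s2) - (a1 + a2) := by ring
    rw [heq] at L2
    set X1 : ℝ := a1 * Real.log (a1 / s1) + (s1 - a1) * Real.log ((s1 - a1) / s1) with hX1
    set X2 : ℝ := a2 * Real.log (a2 / s2) + (s2 - a2) * Real.log ((s2 - a2) / s2) with hX2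
    set X : ℝ := (a1 + a2) * Real.log ((a1 + a2) / (s1 + s2))
      + ((s1 + s2) - (a1 + a2)) * Real.log (((s1 + s2) - (a1 + a2)) / (s1 + s2)) with hX
    have hXle : X ≤ X1 + X2 := by rw [hX, hX1, hX2]; linarith
    have hdiv : X / Real.log 2 ≤ (X1 + X2) / Real.log 2 :=
      div_le_div_of_nonneg_right hXle hl2.le
    have hadd : (X1 + X2) / Real.log 2 = X1 / Real.log 2 + X2 / Real.log 2 := add_div _ _ _
    linarith
end

section
/- For t an integer with 2 ≤ 2t+1 ≤ d₀ and n fixed, define F_{n,t}(σ) = h(σ) - σn·log₂x + σ·log₂(Σ_{i=t+1}^n C(n,i)xⁱ) + (1-σ)·log₂(Σ_{i=0}^t C(n,i)xⁱ), where x > 0 solves Σ_{i=0}^t Σ_{j=t+1}^n C(n,i)C(n,j)(σ(n-j) - i(1-σ))x^{i+j-t-1} = 0. Then F_{n,t}(σ) equals the maximum of g(z) = h(z) + Σᵢ zᵢ log₂ C(n,i) over probability vectors z on {0,...,n} subject to Σᵢ i·zᵢ = σn and Σ_{i=t+1}^n zᵢ = σ. -/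
/-- Shannon entropy (base 2) of a vector, with the convention 0·log 0 = 0. -/
noncomputable def shannonEnt {k : ℕ} (z : Fin k → ℝ) : ℝ :=
  -∑ i, z i * Real.logb 2 (z i)

private lemma gibbs {k : ℕ} (z q : Fin k → ℝ) (hz : ∀ i, 0 ≤ z i) (hq : ∀ i, 0 < q i)
    (hz1 : ∑ i, z i = 1) (hq1 : ∑ i, q i = 1) :
    ∑ i, (z i * Real.logb 2 (q i) - z i * Real.logb 2 (z i)) ≤ 0 := by
  have h2 : (0:ℝ) < Real.log 2 := Real.log_pos one_lt_two
  have key : ∀ i, z i * Real.logb 2 (q i) - z i * Real.logb 2 (z i)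
      ≤ (q i - z i) / Real.log 2 := by
    intro i
    rcases eq_or_lt_of_le (hz i) with h | h
    · rw [← h]
      simp only [zero_mul, sub_zero, sub_self]
      exact div_nonneg (hq i).le h2.le
    · have hlog : Real.logb 2 (q i) - Real.logb 2 (z i) = Real.log (q i / z i) / Real.log 2 := by
        rw [Real.log_div (hq i).ne' h.ne']
        simp only [Real.logb]
        ring
      have h3 : Real.log (q i / z i) ≤ q i / z i - 1 :=
        Real.log_le_sub_one_of_pos (div_pos (hq i) h)
      calc z i * Real.logb 2 (q i) - z i * Real.logb 2 (z i)
          = z i * (Real.log (q i / z i) / Real.log 2) := by rw [← hlog]; ring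
        _ ≤ z i * ((q i / z i - 1) / Real.log 2) := by gcongr
        _ = (q i - z i) / Real.log 2 := by field_simp
  calc ∑ i, (z i * Real.logb 2 (q i) - z i * Real.logb 2 (z i))
      ≤ ∑ i, (q i - z i) / Real.log 2 := Finset.sum_le_sum (fun i _ => key i)
    _ = (∑ i, q i - ∑ i, z i) / Real.log 2 := by
        rw [← Finset.sum_div, Finset.sum_sub_distrib]
    _ = 0 := by rw [hq1, hz1, sub_self, zero_div]

/-- The optimizing distribution. -/
noncomputable def Qfun (n t : ℕ) (σ x A B : ℝ) : ℕ → ℝ := fun i =>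
  if i ≤ t then (1 - σ) * ((Nat.choose n i : ℝ) * x ^ i) / A
  else σ * ((Nat.choose n i : ℝ) * x ^ i) / B


/-- with x > 0 the root of the stated polynomial equation, the closed form
    F_{n,t}(σ) = h(σ) - σn log₂ x + σ log₂(Σ_{i=t+1}^n C(n,i)xⁱ)
                 + (1-σ) log₂(Σ_{i=0}^t C(n,i)xⁱ)
    equals the maximum of g(z) = h(z) + Σᵢ zᵢ log₂ C(n,i) over probability vectors z on
    {0,...,n} with Σᵢ i·zᵢ = σn and Σ_{i=t+1}^n zᵢ = σ. -/
theorem lagrangian_max_closed_form (n t d0 : ℕ) (ht : 1 ≤ t) (h2t : 2 * t + 1 ≤ d0)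
    (htn : t < n) (σ : ℝ) (hσ0 : 0 < σ) (hσ1 : σ < 1) (x : ℝ) (hx : 0 < x)
    (hroot : ∑ i ∈ Finset.range (t + 1), ∑ j ∈ Finset.Icc (t + 1) n,
      (Nat.choose n i : ℝ) * (Nat.choose n j : ℝ) *
        (σ * ((n : ℝ) - (j : ℝ)) - (i : ℝ) * (1 - σ)) * x ^ (i + j - t - 1) = 0) :
    IsGreatest
      ((fun z : Fin (n + 1) → ℝ =>
          shannonEnt z + ∑ i, z i * Real.logb 2 (Nat.choose n (i : ℕ))) ''
        {z : Fin (n + 1) → ℝ | (∀ i, 0 ≤ z i) ∧ ∑ i, z i = 1 ∧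
          (∑ i : Fin (n + 1), ((i : ℕ) : ℝ) * z i = σ * n) ∧
          (∑ i ∈ Finset.univ.filter (fun i : Fin (n + 1) => t + 1 ≤ (i : ℕ)), z i = σ)})
      (binEnt σ - σ * n * Real.logb 2 x
        + σ * Real.logb 2 (∑ i ∈ Finset.Icc (t + 1) n, (Nat.choose n i : ℝ) * x ^ i)
        + (1 - σ) * Real.logb 2 (∑ i ∈ Finset.range (t + 1), (Nat.choose n i : ℝ) * x ^ i)) := by
  have h1σ : 0 < 1 - σ := by linarith
  set A := ∑ i ∈ Finset.range (t + 1), (Nat.choose n i : ℝ) * x ^ i with hA_def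
  set B := ∑ i ∈ Finset.Icc (t + 1) n, (Nat.choose n i : ℝ) * x ^ i with hB_def
  have hA : 0 < A := by
    apply Finset.sum_pos
    · intro i hi
      have hin : i ≤ n := by have := Finset.mem_range.mp hi; omega
      have hc : 0 < (Nat.choose n i : ℝ) := by exact_mod_cast Nat.choose_pos hin
      positivity
    · exact ⟨0, Finset.mem_range.mpr (by omega)⟩
  have hB : 0 < B := by
    apply Finset.sum_pos
    · intro i hi
      have hin : i ≤ n := (Finset.mem_Icc.mp hi).2
      have hc : 0 < (Nat.choose n i : ℝ) := by exact_mod_cast Nat.choose_pos hin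
      positivity
    · exact ⟨t + 1, Finset.mem_Icc.mpr ⟨le_refl _, by omega⟩⟩
  set Sa := ∑ i ∈ Finset.range (t + 1), (i : ℝ) * ((Nat.choose n i : ℝ) * x ^ i) with hSa_def
  set Sb := ∑ i ∈ Finset.Icc (t + 1) n, (i : ℝ) * ((Nat.choose n i : ℝ) * x ^ i) with hSb_def
  set Q : ℕ → ℝ := Qfun n t σ x A B with hQ_def
  set q : Fin (n + 1) → ℝ := fun i => Q (i : ℕ) with hq_def
  -- splitting sums over range (n+1)
  have hsplit : ∀ f : ℕ → ℝ, ∑ i ∈ Finset.range (n + 1), f i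
      = ∑ i ∈ Finset.range (t + 1), f i + ∑ i ∈ Finset.Icc (t + 1) n, f i := by
    intro f
    rw [Finset.range_eq_Ico, Finset.range_eq_Ico, ← Finset.Ico_add_one_right_eq_Icc]
    exact (Finset.sum_Ico_consecutive f (m := 0) (n := t + 1) (k := n + 1) (by omega) (by omega)).symm
  -- weighted sums of Q
  have hlow : ∀ g : ℕ → ℝ, ∑ i ∈ Finset.range (t + 1), g i * Q i
      = (1 - σ) / A * ∑ i ∈ Finset.range (t + 1), g i * ((Nat.choose n i : ℝ) * x ^ i) := by
    intro g
    rw [Finset.mul_sum]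
    apply Finset.sum_congr rfl
    intro i hi
    have hit : i ≤ t := by have := Finset.mem_range.mp hi; omega
    simp only [hQ_def, Qfun, if_pos hit]
    ring
  have hhigh : ∀ g : ℕ → ℝ, ∑ i ∈ Finset.Icc (t + 1) n, g i * Q i
      = σ / B * ∑ i ∈ Finset.Icc (t + 1) n, g i * ((Nat.choose n i : ℝ) * x ^ i) := by
    intro g
    rw [Finset.mul_sum]
    apply Finset.sum_congr rfl
    intro i hi
    have hit : ¬ i ≤ t := by have := (Finset.mem_Icc.mp hi).1; omega
    simp only [hQ_def, Qfun, if_neg hit]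
    ring
  have hS1 : ∑ i ∈ Finset.range (t + 1), Q i = 1 - σ := by
    have h := hlow (fun _ => 1)
    simp only [one_mul] at h
    rw [h, ← hA_def]
    field_simp
  have hS2 : ∑ i ∈ Finset.Icc (t + 1) n, Q i = σ := by
    have h := hhigh (fun _ => 1)
    simp only [one_mul] at h
    rw [h, ← hB_def]
    field_simp
  -- process the root equation
  have h1 : ∑ i ∈ Finset.range (t + 1), ∑ j ∈ Finset.Icc (t + 1) n,
      (Nat.choose n i : ℝ) * (Nat.choose n j : ℝ) *
        (σ * ((n : ℝ) - (j : ℝ)) - (i : ℝ) * (1 - σ)) * x ^ (i + j) = 0 := by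
    have e : ∑ i ∈ Finset.range (t + 1), ∑ j ∈ Finset.Icc (t + 1) n,
        (Nat.choose n i : ℝ) * (Nat.choose n j : ℝ) *
          (σ * ((n : ℝ) - (j : ℝ)) - (i : ℝ) * (1 - σ)) * x ^ (i + j)
        = (∑ i ∈ Finset.range (t + 1), ∑ j ∈ Finset.Icc (t + 1) n,
        (Nat.choose n i : ℝ) * (Nat.choose n j : ℝ) *
          (σ * ((n : ℝ) - (j : ℝ)) - (i : ℝ) * (1 - σ)) * x ^ (i + j - t - 1)) * x ^ (t + 1) := by
      rw [Finset.sum_mul]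
      apply Finset.sum_congr rfl
      intro i _
      rw [Finset.sum_mul]
      apply Finset.sum_congr rfl
      intro j hj
      have hj1 : t + 1 ≤ j := (Finset.mem_Icc.mp hj).1
      have hxe : x ^ (i + j - t - 1) * x ^ (t + 1) = x ^ (i + j) := by
        rw [← pow_add]
        congr 1
        omega
      rw [← hxe]
      ring
    rw [e, hroot, zero_mul]
  have h2 : ∑ i ∈ Finset.range (t + 1), ∑ j ∈ Finset.Icc (t + 1) n,
      (Nat.choose n i : ℝ) * (Nat.choose n j : ℝ) *
        (σ * ((n : ℝ) - (j : ℝ)) - (i : ℝ) * (1 - σ)) * x ^ (i + j)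
      = σ * (n : ℝ) * A * B - σ * A * Sb - (1 - σ) * Sa * B := by
    have inner : ∀ i ∈ Finset.range (t + 1), ∑ j ∈ Finset.Icc (t + 1) n,
        (Nat.choose n i : ℝ) * (Nat.choose n j : ℝ) *
          (σ * ((n : ℝ) - (j : ℝ)) - (i : ℝ) * (1 - σ)) * x ^ (i + j)
        = ((σ * (n : ℝ) - (i : ℝ) * (1 - σ)) * ((Nat.choose n i : ℝ) * x ^ i)) * B
          - (σ * ((Nat.choose n i : ℝ) * x ^ i)) * Sb := by
      intro i _
      have e : ∀ j ∈ Finset.Icc (t + 1) n,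
          (Nat.choose n i : ℝ) * (Nat.choose n j : ℝ) *
            (σ * ((n : ℝ) - (j : ℝ)) - (i : ℝ) * (1 - σ)) * x ^ (i + j)
          = ((σ * (n : ℝ) - (i : ℝ) * (1 - σ)) * ((Nat.choose n i : ℝ) * x ^ i))
              * ((Nat.choose n j : ℝ) * x ^ j)
            - (σ * ((Nat.choose n i : ℝ) * x ^ i)) * ((j : ℝ) * ((Nat.choose n j : ℝ) * x ^ j)) := by
        intro j _
        rw [pow_add]
        ring
      rw [Finset.sum_congr rfl e, Finset.sum_sub_distrib, ← Finset.mul_sum, ← Finset.mul_sum,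
        ← hB_def, ← hSb_def]
    rw [Finset.sum_congr rfl inner, Finset.sum_sub_distrib]
    have e1 : ∑ i ∈ Finset.range (t + 1),
        ((σ * (n : ℝ) - (i : ℝ) * (1 - σ)) * ((Nat.choose n i : ℝ) * x ^ i)) * B
        = (σ * (n : ℝ) * A - (1 - σ) * Sa) * B := by
      rw [← Finset.sum_mul]
      congr 1
      have e : ∀ i ∈ Finset.range (t + 1),
          (σ * (n : ℝ) - (i : ℝ) * (1 - σ)) * ((Nat.choose n i : ℝ) * x ^ i)
          = σ * (n : ℝ) * ((Nat.choose n i : ℝ) * x ^ i)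
            - (1 - σ) * ((i : ℝ) * ((Nat.choose n i : ℝ) * x ^ i)) := by
        intro i _; ring
      rw [Finset.sum_congr rfl e, Finset.sum_sub_distrib, ← Finset.mul_sum, ← Finset.mul_sum,
        ← hA_def, ← hSa_def]
    have e2 : ∑ i ∈ Finset.range (t + 1), (σ * ((Nat.choose n i : ℝ) * x ^ i)) * Sb
        = σ * A * Sb := by
      rw [← Finset.sum_mul, ← Finset.mul_sum, ← hA_def]
    rw [e1, e2]
    ring
  have hkey : σ * (n : ℝ) * A * B = σ * A * Sb + (1 - σ) * Sa * B := by
    rw [h2] at h1; linarith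
  -- q is positive
  have hCpos : ∀ i : Fin (n + 1), (0:ℝ) < (Nat.choose n (i : ℕ) : ℝ) := by
    intro i
    exact_mod_cast Nat.choose_pos (Nat.lt_succ_iff.mp i.isLt)
  have hqpos : ∀ i : Fin (n + 1), 0 < q i := by
    intro i
    have hc := hCpos i
    by_cases hit : (i : ℕ) ≤ t
    · simp only [hq_def, hQ_def, Qfun, if_pos hit]
      positivity
    · simp only [hq_def, hQ_def, Qfun, if_neg hit]
      positivity
  -- constraints for q
  have hq1 : ∑ i, q i = 1 := by
    simp only [hq_def]
    rw [Fin.sum_univ_eq_sum_range (fun k => Q k), hsplit, hS1, hS2]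
    ring
  have hqm : ∑ i : Fin (n + 1), ((i : ℕ) : ℝ) * q i = σ * n := by
    simp only [hq_def]
    rw [Fin.sum_univ_eq_sum_range (fun k => (k : ℝ) * Q k), hsplit,
      hlow (fun k => (k : ℝ)), hhigh (fun k => (k : ℝ)), ← hSa_def, ← hSb_def]
    field_simp
    linear_combination (-1 : ℝ) * hkey
  have hqh : ∑ i ∈ Finset.univ.filter (fun i : Fin (n + 1) => t + 1 ≤ (i : ℕ)), q i = σ := by
    rw [Finset.sum_filter]
    simp only [hq_def]
    rw [Fin.sum_univ_eq_sum_range (fun k => if t + 1 ≤ k then Q k else 0), hsplit]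
    have e1 : ∑ i ∈ Finset.range (t + 1), (if t + 1 ≤ i then Q i else 0) = 0 := by
      apply Finset.sum_eq_zero
      intro i hi
      have : ¬ t + 1 ≤ i := by have := Finset.mem_range.mp hi; omega
      rw [if_neg this]
    have e2 : ∑ i ∈ Finset.Icc (t + 1) n, (if t + 1 ≤ i then Q i else 0)
        = ∑ i ∈ Finset.Icc (t + 1) n, Q i := by
      apply Finset.sum_congr rfl
      intro i hi
      rw [if_pos (Finset.mem_Icc.mp hi).1]
    rw [e1, e2, hS2, zero_add]
  -- the log identity
  have hlogq : ∀ i : Fin (n + 1), Real.logb 2 ((Nat.choose n (i : ℕ) : ℝ))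
      = Real.logb 2 (q i)
        + (if (i : ℕ) ≤ t then Real.logb 2 A - Real.logb 2 (1 - σ)
            else Real.logb 2 B - Real.logb 2 σ)
        - ((i : ℕ) : ℝ) * Real.logb 2 x := by
    intro i
    have hc := hCpos i
    have hxp : (0:ℝ) < x ^ (i : ℕ) := pow_pos hx _
    by_cases hit : (i : ℕ) ≤ t
    · have hqi : q i = (1 - σ) * ((Nat.choose n (i : ℕ) : ℝ) * x ^ (i : ℕ)) / A := by
        simp only [hq_def, hQ_def, Qfun, if_pos hit]
      rw [if_pos hit, hqi,
        Real.logb_div (by positivity) hA.ne',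
        Real.logb_mul h1σ.ne' (by positivity),
        Real.logb_mul hc.ne' hxp.ne',
        Real.logb_pow]
      ring
    · have hqi : q i = σ * ((Nat.choose n (i : ℕ) : ℝ) * x ^ (i : ℕ)) / B := by
        simp only [hq_def, hQ_def, Qfun, if_neg hit]
      rw [if_neg hit, hqi,
        Real.logb_div (by positivity) hB.ne',
        Real.logb_mul hσ0.ne' (by positivity),
        Real.logb_mul hc.ne' hxp.ne',
        Real.logb_pow]
      ring
  -- the main identity
  have hmain : ∀ z : Fin (n + 1) → ℝ,
      (∑ i, z i = 1) → (∑ i : Fin (n + 1), ((i : ℕ) : ℝ) * z i = σ * n) →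
      (∑ i ∈ Finset.univ.filter (fun i : Fin (n + 1) => t + 1 ≤ (i : ℕ)), z i = σ) →
      shannonEnt z + ∑ i, z i * Real.logb 2 (Nat.choose n (i : ℕ))
        = (∑ i, (z i * Real.logb 2 (q i) - z i * Real.logb 2 (z i)))
          + (binEnt σ - σ * n * Real.logb 2 x + σ * Real.logb 2 B + (1 - σ) * Real.logb 2 A) := by
    intro z hz1 hzm hzh
    have hzl : ∑ i ∈ Finset.univ.filter (fun i : Fin (n + 1) => ¬ t + 1 ≤ (i : ℕ)), z i
        = 1 - σ := by
      have h := Finset.sum_filter_add_sum_filter_not Finset.univ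
        (fun i : Fin (n + 1) => t + 1 ≤ (i : ℕ)) z
      rw [hzh, hz1] at h
      linarith
    have step1 : ∑ i, z i * Real.logb 2 (Nat.choose n (i : ℕ))
        = ∑ i, z i * Real.logb 2 (q i)
          + ∑ i, z i * (if (i : ℕ) ≤ t then Real.logb 2 A - Real.logb 2 (1 - σ)
              else Real.logb 2 B - Real.logb 2 σ)
          - Real.logb 2 x * ∑ i : Fin (n + 1), ((i : ℕ) : ℝ) * z i := by
      rw [Finset.mul_sum, ← Finset.sum_add_distrib, ← Finset.sum_sub_distrib]
      apply Finset.sum_congr rfl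
      intro i _
      rw [hlogq i]
      ring
    have step2 : ∑ i, z i * (if (i : ℕ) ≤ t then Real.logb 2 A - Real.logb 2 (1 - σ)
          else Real.logb 2 B - Real.logb 2 σ)
        = (1 - σ) * (Real.logb 2 A - Real.logb 2 (1 - σ))
          + σ * (Real.logb 2 B - Real.logb 2 σ) := by
      rw [← Finset.sum_filter_add_sum_filter_not Finset.univ
        (fun i : Fin (n + 1) => t + 1 ≤ (i : ℕ))]
      have e1 : ∑ i ∈ Finset.univ.filter (fun i : Fin (n + 1) => t + 1 ≤ (i : ℕ)),
          z i * (if (i : ℕ) ≤ t then Real.logb 2 A - Real.logb 2 (1 - σ)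
            else Real.logb 2 B - Real.logb 2 σ)
          = ∑ i ∈ Finset.univ.filter (fun i : Fin (n + 1) => t + 1 ≤ (i : ℕ)),
              z i * (Real.logb 2 B - Real.logb 2 σ) := by
        apply Finset.sum_congr rfl
        intro i hi
        have hp := (Finset.mem_filter.mp hi).2
        rw [if_neg (by omega)]
      have e2 : ∑ i ∈ Finset.univ.filter (fun i : Fin (n + 1) => ¬ t + 1 ≤ (i : ℕ)),
          z i * (if (i : ℕ) ≤ t then Real.logb 2 A - Real.logb 2 (1 - σ)
            else Real.logb 2 B - Real.logb 2 σ)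
          = ∑ i ∈ Finset.univ.filter (fun i : Fin (n + 1) => ¬ t + 1 ≤ (i : ℕ)),
              z i * (Real.logb 2 A - Real.logb 2 (1 - σ)) := by
        apply Finset.sum_congr rfl
        intro i hi
        have hp := (Finset.mem_filter.mp hi).2
        rw [if_pos (by omega)]
      rw [e1, e2, ← Finset.sum_mul, ← Finset.sum_mul, hzh, hzl]
      ring
    rw [shannonEnt, step1, step2, hzm, Finset.sum_sub_distrib, binEnt]
    ring
  constructor
  · refine ⟨q, ⟨fun i => (hqpos i).le, hq1, hqm, hqh⟩, ?_⟩
    have hz : ∑ i, (q i * Real.logb 2 (q i) - q i * Real.logb 2 (q i)) = 0 := by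
      simp
    show shannonEnt q + ∑ i : Fin (n + 1), q i * Real.logb 2 (Nat.choose n (i : ℕ))
      = binEnt σ - σ * ↑n * Real.logb 2 x + σ * Real.logb 2 B + (1 - σ) * Real.logb 2 A
    rw [hmain q hq1 hqm hqh, hz, zero_add]
  · rintro v ⟨z, ⟨hz0, hz1, hzm, hzh⟩, rfl⟩
    have hb := gibbs z q hz0 hqpos hz1 hq1
    simp only []
    rw [hmain z hz1 hzm hzh]
    linarith
end

section
/- The function f(λ,μ₁,μ₂) = λ·h(μ₁/λ) + (1 - λ - μ₁/τ)·h((γ - μ₁ - μ₂)/(1 - λ - μ₁/τ)) + (μ₁/τ)·h(μ₂τ/μ₁) is concave on its domain (where all arguments of h lie in (0,1) and all outer coefficients are positive), for any fixed constants γ, τ ∈ (0,1). -/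
lemma binEnt_eq (p : ℝ) : binEnt p = (Real.log 2)⁻¹ * Real.binEntropy p := by
  simp [binEnt, Real.binEntropy, Real.logb, Real.log_inv, div_eq_inv_mul]
  ring

lemma binEnt_concave : ConcaveOn ℝ (Set.Icc (0:ℝ) 1) binEnt := by
  have h := (Real.strictConcave_binEntropy.concaveOn).smul
    (c := (Real.log 2)⁻¹) (by positivity)
  convert h using 2 with p
  all_goals first | rfl | simp [binEnt_eq, smul_eq_mul]

lemma persp (a b x1 y1 x2 y2 : ℝ) (ha : 0 ≤ a) (hb : 0 ≤ b) (hab : a + b = 1)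
    (hx1 : 0 < x1) (hy1 : 0 < y1) (h1 : y1 < x1)
    (hx2 : 0 < x2) (hy2 : 0 < y2) (h2 : y2 < x2) :
    a * (x1 * binEnt (y1 / x1)) + b * (x2 * binEnt (y2 / x2)) ≤
      (a * x1 + b * x2) * binEnt ((a * y1 + b * y2) / (a * x1 + b * x2)) := by
  have hX : 0 < a * x1 + b * x2 := by
    rcases eq_or_lt_of_le ha with h | h
    · have hb1 : b = 1 := by linarith
      simp [← h, hb1, hx2]
    · nlinarith
  set X := a * x1 + b * x2 with hXdef
  have hw1 : 0 ≤ a * x1 / X := by positivity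
  have hw2 : 0 ≤ b * x2 / X := by positivity
  have hwsum : a * x1 / X + b * x2 / X = 1 := by field_simp; rw [hXdef]
  have hm1 : y1 / x1 ∈ Set.Icc (0:ℝ) 1 :=
    ⟨by positivity, le_of_lt ((div_lt_one hx1).2 h1)⟩
  have hm2 : y2 / x2 ∈ Set.Icc (0:ℝ) 1 :=
    ⟨by positivity, le_of_lt ((div_lt_one hx2).2 h2)⟩
  have key := binEnt_concave.2 hm1 hm2 hw1 hw2 hwsum
  have harg : (a * x1 / X) • (y1 / x1) + (b * x2 / X) • (y2 / x2)
      = (a * y1 + b * y2) / X := by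
    simp only [smul_eq_mul]
    field_simp
  rw [harg, smul_eq_mul, smul_eq_mul] at key
  have := mul_le_mul_of_nonneg_left key (le_of_lt hX)
  calc a * (x1 * binEnt (y1 / x1)) + b * (x2 * binEnt (y2 / x2))
      = X * (a * x1 / X * binEnt (y1 / x1) + b * x2 / X * binEnt (y2 / x2)) := by
        field_simp
    _ ≤ X * binEnt ((a * y1 + b * y2) / X) := this

lemma lt_combo {a b u v u' v' : ℝ} (ha : 0 ≤ a) (hb : 0 ≤ b) (hab : a + b = 1)
    (h1 : u < u') (h2 : v < v') : a * u + b * v < a * u' + b * v' := by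
  rcases eq_or_lt_of_le ha with h | h
  · have hb1 : b = 1 := by linarith
    simp [← h, hb1, h2]
  · have := mul_lt_mul_of_pos_left h1 h
    have := mul_le_mul_of_nonneg_left (le_of_lt h2) hb
    linarith

lemma pos_combo {a b u v : ℝ} (ha : 0 ≤ a) (hb : 0 ≤ b) (hab : a + b = 1)
    (h1 : 0 < u) (h2 : 0 < v) : 0 < a * u + b * v := by
  have := lt_combo ha hb hab h1 h2
  simpa using this

/-- the function
    f(λ,μ₁,μ₂) = λ·h(μ₁/λ) + (1-λ-μ₁/τ)·h((γ-μ₁-μ₂)/(1-λ-μ₁/τ)) + (μ₁/τ)·h(μ₂τ/μ₁)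
    is concave on its domain (all arguments of h in (0,1), all outer coefficients
    positive), for any fixed γ, τ ∈ (0,1). -/
theorem f_concave (γ τ : ℝ) (hγ0 : 0 < γ) (hγ1 : γ < 1) (hτ0 : 0 < τ) (hτ1 : τ < 1) :
    ConcaveOn ℝ
      {p : ℝ × ℝ × ℝ |
        0 < p.1 ∧ 0 < p.2.1 ∧ 0 < p.2.2 ∧
        p.2.1 / p.1 < 1 ∧ p.2.2 * τ / p.2.1 < 1 ∧
        0 < 1 - p.1 - p.2.1 / τ ∧
        0 < γ - p.2.1 - p.2.2 ∧ γ - p.2.1 - p.2.2 < 1 - p.1 - p.2.1 / τ}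
      (fun p : ℝ × ℝ × ℝ =>
        p.1 * binEnt (p.2.1 / p.1)
        + (1 - p.1 - p.2.1 / τ) * binEnt ((γ - p.2.1 - p.2.2) / (1 - p.1 - p.2.1 / τ))
        + (p.2.1 / τ) * binEnt (p.2.2 * τ / p.2.1)) := by
  have hτ : τ ≠ 0 := ne_of_gt hτ0
  constructor
  · -- convexity of the domain
    intro p hp q hq a b ha hb hab
    obtain ⟨hp1, hp21, hp22, hp4, hp5, hp6, hp7, hp8⟩ := hp
    obtain ⟨hq1, hq21, hq22, hq4, hq5, hq6, hq7, hq8⟩ := hq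
    have hp4' : p.2.1 < p.1 := by rwa [div_lt_one hp1] at hp4
    have hq4' : q.2.1 < q.1 := by rwa [div_lt_one hq1] at hq4
    have hp5' : p.2.2 * τ < p.2.1 := by rwa [div_lt_one hp21] at hp5
    have hq5' : q.2.2 * τ < q.2.1 := by rwa [div_lt_one hq21] at hq5
    simp only [Set.mem_setOf_eq, Prod.fst_add, Prod.snd_add, Prod.smul_fst, Prod.smul_snd,
      smul_eq_mul]
    have hc1 : 0 < a * p.1 + b * q.1 := pos_combo ha hb hab hp1 hq1
    have hc21 : 0 < a * p.2.1 + b * q.2.1 := pos_combo ha hb hab hp21 hq21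
    have hc22 : 0 < a * p.2.2 + b * q.2.2 := pos_combo ha hb hab hp22 hq22
    have e6 : 1 - (a * p.1 + b * q.1) - (a * p.2.1 + b * q.2.1) / τ
        = a * (1 - p.1 - p.2.1 / τ) + b * (1 - q.1 - q.2.1 / τ) := by
      field_simp
      linear_combination (-τ) * hab
    have e7 : γ - (a * p.2.1 + b * q.2.1) - (a * p.2.2 + b * q.2.2)
        = a * (γ - p.2.1 - p.2.2) + b * (γ - q.2.1 - q.2.2) := by
      linear_combination (-γ) * hab
    refine ⟨hc1, hc21, hc22, ?_, ?_, ?_, ?_, ?_⟩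
    · rw [div_lt_one hc1]
      exact lt_combo ha hb hab hp4' hq4'
    · rw [div_lt_one hc21]
      have : a * (p.2.2 * τ) + b * (q.2.2 * τ) < a * p.2.1 + b * q.2.1 :=
        lt_combo ha hb hab hp5' hq5'
      nlinarith
    · rw [e6]; exact pos_combo ha hb hab hp6 hq6
    · rw [e7]; exact pos_combo ha hb hab hp7 hq7
    · rw [e6, e7]; exact lt_combo ha hb hab hp8 hq8
  · intro p hp q hq a b ha hb hab
    obtain ⟨hp1, hp21, hp22, hp4, hp5, hp6, hp7, hp8⟩ := hp
    obtain ⟨hq1, hq21, hq22, hq4, hq5, hq6, hq7, hq8⟩ := hq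
    have hp4' : p.2.1 < p.1 := by rwa [div_lt_one hp1] at hp4
    have hq4' : q.2.1 < q.1 := by rwa [div_lt_one hq1] at hq4
    have hp5' : p.2.2 < p.2.1 / τ := by
      rw [lt_div_iff₀ hτ0]; rwa [div_lt_one hp21] at hp5
    have hq5' : q.2.2 < q.2.1 / τ := by
      rw [lt_div_iff₀ hτ0]; rwa [div_lt_one hq21] at hq5
    simp only [Prod.fst_add, Prod.snd_add, Prod.smul_fst, Prod.smul_snd, smul_eq_mul]
    have hc1 : 0 < a * p.1 + b * q.1 := pos_combo ha hb hab hp1 hq1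
    have hc21 : 0 < a * p.2.1 + b * q.2.1 := pos_combo ha hb hab hp21 hq21
    have H1 := persp a b p.1 p.2.1 q.1 q.2.1 ha hb hab hp1 hp21 hp4' hq1 hq21 hq4'
    have H2 := persp a b (1 - p.1 - p.2.1 / τ) (γ - p.2.1 - p.2.2)
      (1 - q.1 - q.2.1 / τ) (γ - q.2.1 - q.2.2) ha hb hab hp6 hp7 hp8 hq6 hq7 hq8
    have H3 := persp a b (p.2.1 / τ) p.2.2 (q.2.1 / τ) q.2.2 ha hb hab
      (by positivity) hp22 hp5' (by positivity) hq22 hq5'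
    have e6 : a * (1 - p.1 - p.2.1 / τ) + b * (1 - q.1 - q.2.1 / τ)
        = 1 - (a * p.1 + b * q.1) - (a * p.2.1 + b * q.2.1) / τ := by
      field_simp
      linear_combination τ * hab
    have e7 : a * (γ - p.2.1 - p.2.2) + b * (γ - q.2.1 - q.2.2)
        = γ - (a * p.2.1 + b * q.2.1) - (a * p.2.2 + b * q.2.2) := by
      linear_combination γ * hab
    have e8 : a * (p.2.1 / τ) + b * (q.2.1 / τ) = (a * p.2.1 + b * q.2.1) / τ := by
      field_simp
    rw [e6, e7] at H2
    rw [e8] at H3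
    have e9 : (a * p.2.2 + b * q.2.2) / ((a * p.2.1 + b * q.2.1) / τ)
        = (a * p.2.2 + b * q.2.2) * τ / (a * p.2.1 + b * q.2.1) := by
      rw [div_div_eq_mul_div]
    rw [e9] at H3
    linarith
end
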